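/- Let ε > 0 and suppose (x, y, λ₁, λ₂) : I → ℝ⁴ is a differentiable curve on an open interval I satisfying the variational equations of the damped Duffing oscillator: ẋ = y + λ₁, ε·ẏ = x − x³ − y, λ̇₁ = (3x² − 1)·λ₂, ε·λ̇₂ = λ₂ − λ₁ on I. Then the function t ↦ λ₁(t)·y(t) + λ₁(t)²/2 + λ₂(t)·(x(t) − x(t)³ − y(t)) is constant on I. -/

import Mathlib

/-- Along any differentiable solution of the variational equations of the damped Duffing
oscillator `ẋ = y + λ₁`, `ε·ẏ = x − x³ − y`, `λ̇₁ = (3x² − 1)·λ₂`, `ε·λ̇₂ = λ₂ − λ₁`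
on an open interval `I = (a,b)`, the Hamiltonian
`λ₁·y + λ₁²/2 + λ₂·(x − x³ − y)` is constant. -/
theorem stmt4 (ε : ℝ) (hε : 0 < ε) (a b : ℝ)
    (x y l1 l2 : ℝ → ℝ)
    (hx : ∀ t ∈ Set.Ioo a b, DifferentiableAt ℝ x t)
    (hy : ∀ t ∈ Set.Ioo a b, DifferentiableAt ℝ y t)
    (hl1 : ∀ t ∈ Set.Ioo a b, DifferentiableAt ℝ l1 t)
    (hl2 : ∀ t ∈ Set.Ioo a b, DifferentiableAt ℝ l2 t)
    (heqx : ∀ t ∈ Set.Ioo a b, deriv x t = y t + l1 t)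
    (heqy : ∀ t ∈ Set.Ioo a b, ε * deriv y t = x t - (x t) ^ 3 - y t)
    (heql1 : ∀ t ∈ Set.Ioo a b, deriv l1 t = (3 * (x t) ^ 2 - 1) * l2 t)
    (heql2 : ∀ t ∈ Set.Ioo a b, ε * deriv l2 t = l2 t - l1 t) :
    ∃ c : ℝ, ∀ t ∈ Set.Ioo a b,
      l1 t * y t + (l1 t) ^ 2 / 2 + l2 t * (x t - (x t) ^ 3 - y t) = c := by
  set H : ℝ → ℝ := fun t => l1 t * y t + (l1 t) ^ 2 / 2 + l2 t * (x t - (x t) ^ 3 - y t)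
    with hH
  have hεne : ε ≠ 0 := ne_of_gt hε
  have key : ∀ t ∈ Set.Ioo a b, HasDerivAt H 0 t := by
    intro t ht
    have hxd := (hx t ht).hasDerivAt
    have hyd := (hy t ht).hasDerivAt
    have hl1d := (hl1 t ht).hasDerivAt
    have hl2d := (hl2 t ht).hasDerivAt
    have h1 : HasDerivAt H
        (deriv l1 t * y t + l1 t * deriv y t + l1 t * deriv l1 t +
          (deriv l2 t * (x t - (x t) ^ 3 - y t) +
            l2 t * (deriv x t - 3 * (x t) ^ 2 * deriv x t - deriv y t))) t := by
      have : HasDerivAt (fun t => (l1 t) ^ 2 / 2) (l1 t * deriv l1 t) t := by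
        have := (hl1d.fun_pow 2).div_const 2
        refine this.congr_deriv ?_
        ring
      have hcube : HasDerivAt (fun t => x t - (x t) ^ 3 - y t)
          (deriv x t - 3 * (x t) ^ 2 * deriv x t - deriv y t) t := by
        have := (hxd.fun_sub (hxd.fun_pow 3)).fun_sub hyd
        refine this.congr_deriv ?_
        norm_num
      exact ((hl1d.mul hyd).add this).add (hl2d.mul hcube)
    convert h1 using 1
    have e1 := heqx t ht
    have e2 := heqy t ht
    have e3 := heql1 t ht
    have e4 := heql2 t ht
    have e2' : deriv y t = (x t - (x t) ^ 3 - y t) / ε := by field_simp; linarith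
    have e4' : deriv l2 t = (l2 t - l1 t) / ε := by field_simp; linarith
    rw [e1, e2', e3, e4']
    field_simp
    ring
  rcases Set.eq_empty_or_nonempty (Set.Ioo a b) with he | ⟨t0, ht0⟩
  · exact ⟨0, fun t ht => absurd ht (by simp [he])⟩
  · refine ⟨H t0, fun t ht => ?_⟩
    have hdiff : DifferentiableOn ℝ H (Set.Ioo a b) :=
      fun s hs => ((key s hs).differentiableAt).differentiableWithinAt
    have hfd : ∀ s ∈ Set.Ioo a b, fderivWithin ℝ H (Set.Ioo a b) s = 0 := by
      intro s hs
      rw [fderivWithin_eq_fderiv (isOpen_Ioo.uniqueDiffOn s hs) (key s hs).differentiableAt]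
      have := (key s hs).hasFDerivAt.fderiv
      rw [this]
      ext
      simp
    exact (convex_Ioo a b).is_const_of_fderivWithin_eq_zero hdiff hfd ht ht0
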